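/- Let (V, ω) be a symplectic vector space with a symplectic linear action of a finite group G, and let L be a G-invariant Lagrangian subspace of V. Then there exists a G-invariant Lagrangian subspace N of V with V = L ⊕ N. -/

import Mathlib

/-- A subspace `L` of a vector space with a bilinear form `ω` is Lagrangian if `ω`
vanishes identically on `L × L` and `dim L = (dim V)/2`. -/
def IsLagrangian {V : Type*} [AddCommGroup V] [Module ℝ V]
    (ω : V →ₗ[ℝ] V →ₗ[ℝ] ℝ) (L : Submodule ℝ V) : Prop :=
  (∀ v ∈ L, ∀ w ∈ L, ω v w = 0) ∧
  2 * Module.finrank ℝ L = Module.finrank ℝ V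

set_option maxHeartbeats 1000000 in
/-- A `G`-invariant Lagrangian subspace of a symplectic vector space
with a symplectic linear action of a finite group `G` admits a `G`-invariant
Lagrangian complement. -/
theorem invariant_lagrangian_complement
    {V : Type*} [AddCommGroup V] [Module ℝ V] [FiniteDimensional ℝ V]
    (ω : V →ₗ[ℝ] V →ₗ[ℝ] ℝ)
    (halt : ∀ v, ω v v = 0)
    (hnd : ∀ v, (∀ w, ω v w = 0) → v = 0)
    {G : Type*} [Group G] [Finite G]
    (ρ : G →* (V ≃ₗ[ℝ] V))
    (hsymp : ∀ (g : G) (v w : V), ω (ρ g v) (ρ g w) = ω v w)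
    (L : Submodule ℝ V) (hL : IsLagrangian ω L)
    (hLinv : ∀ (g : G), ∀ v ∈ L, ρ g v ∈ L) :
    ∃ N : Submodule ℝ V, IsLagrangian ω N ∧
      (∀ (g : G), ∀ v ∈ N, ρ g v ∈ N) ∧ IsCompl L N := by
  classical
  cases nonempty_fintype G
  obtain ⟨hLiso, hLdim⟩ := hL
  -- skew-symmetry of ω
  have hskew : ∀ v w : V, ω w v = - ω v w := by
    intro v w
    have h := halt (v + w)
    simp only [map_add, LinearMap.add_apply, halt] at h
    linarith
  -- basic facts about the action
  have hmul : ∀ (a b : G) (v : V), ρ (a * b) v = ρ a (ρ b v) := by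
    intro a b v; rw [map_mul]; rfl
  have hρ : ∀ (g : G) (v : V), ρ g (ρ g⁻¹ v) = v := by
    intro g v
    rw [← hmul, mul_inv_cancel, map_one]; rfl
  have hρ' : ∀ (g : G) (v : V), ρ g⁻¹ (ρ g v) = v := by
    intro g v
    have := hρ g⁻¹ v
    rwa [inv_inv] at this
  -- construct a G-invariant projection onto L
  obtain ⟨K₀, hK₀⟩ := Submodule.exists_isCompl L
  set π₀ : V →ₗ[ℝ] V := L.subtype ∘ₗ (L.projectionOnto K₀ hK₀) with hπ₀def
  have hπ₀L : ∀ v : V, π₀ v ∈ L := fun v => (L.linearProjOfIsCompl K₀ hK₀ v).2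
  have hπ₀id : ∀ v ∈ L, π₀ v = v := by
    intro v hv
    have := Submodule.linearProjOfIsCompl_apply_left hK₀ ⟨v, hv⟩
    simp only [hπ₀def, LinearMap.comp_apply, Submodule.coe_subtype]
    rw [show (⟨v, hv⟩ : L).1 = v from rfl] at this
    rw [this]
  set n : ℝ := (Fintype.card G : ℝ) with hn
  have hn0 : n ≠ 0 := by
    simp [hn, Fintype.card_ne_zero]
  set π : V →ₗ[ℝ] V :=
    n⁻¹ • ∑ g : G, ((ρ g).toLinearMap ∘ₗ π₀ ∘ₗ (ρ g⁻¹).toLinearMap) with hπdef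
  have hπapp : ∀ v : V, π v = n⁻¹ • ∑ g : G, ρ g (π₀ (ρ g⁻¹ v)) := by
    intro v
    simp [hπdef, LinearMap.sum_apply]
  have hπL : ∀ v : V, π v ∈ L := by
    intro v
    rw [hπapp]
    exact L.smul_mem _ (Submodule.sum_mem _ fun g _ => hLinv g _ (hπ₀L _))
  have hπid : ∀ v ∈ L, π v = v := by
    intro v hv
    rw [hπapp]
    have : ∀ g : G, ρ g (π₀ (ρ g⁻¹ v)) = v := by
      intro g
      rw [hπ₀id _ (hLinv g⁻¹ v hv), hρ]
    rw [Finset.sum_congr rfl fun g _ => this g, Finset.sum_const]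
    simp only [Finset.card_univ]
    rw [← Nat.cast_smul_eq_nsmul ℝ, smul_smul, inv_mul_cancel₀ hn0, one_smul]
  have hπequiv : ∀ (g : G) (v : V), π (ρ g v) = ρ g (π v) := by
    intro g v
    rw [hπapp, hπapp, map_smul, map_sum]
    congr 1
    refine Fintype.sum_equiv (Equiv.mulLeft g⁻¹) _ _ ?_
    intro g'
    simp only [Equiv.coe_mulLeft]
    have e1 : ρ g'⁻¹ (ρ g v) = ρ (g⁻¹ * g')⁻¹ v := by
      rw [mul_inv_rev, inv_inv, hmul]
    rw [e1, ← hmul, mul_inv_cancel_left]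
  set K : Submodule ℝ V := LinearMap.ker π with hKdef
  have hKinv : ∀ (g : G), ∀ v ∈ K, ρ g v ∈ K := by
    intro g v hv
    have : π v = 0 := hv
    simp only [hKdef, LinearMap.mem_ker, hπequiv, this, map_zero]
  have hcompl : IsCompl L K := by
    constructor
    · rw [disjoint_iff, Submodule.eq_bot_iff]
      rintro v ⟨hvL, hvK⟩
      have : π v = 0 := hvK
      rw [hπid v hvL] at this
      exact this
    · rw [codisjoint_iff, eq_top_iff]
      intro v _
      have h1 : π v ∈ L := hπL v
      have h2 : v - π v ∈ K := by
        simp only [hKdef, LinearMap.mem_ker, map_sub, hπid _ (hπL v), sub_self]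
      have : v = π v + (v - π v) := by abel
      rw [this]
      exact Submodule.add_mem_sup h1 h2
  have hdimLK : Module.finrank ℝ L = Module.finrank ℝ K := by
    have := Submodule.finrank_add_eq_of_isCompl hcompl
    omega
  have hsplit : ∀ v : V, ∃ l ∈ L, ∃ k ∈ K, v = l + k := by
    intro v
    have : v ∈ L ⊔ K := by rw [hcompl.codisjoint.eq_top]; trivial
    obtain ⟨l, hl, k, hk, h⟩ := Submodule.mem_sup.mp this
    exact ⟨l, hl, k, hk, h.symm⟩
  -- the pairing L × K is nondegenerate in the first slot
  have hΦinj : ∀ l ∈ L, (∀ k ∈ K, ω l k = 0) → l = 0 := by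
    intro l hl h
    apply hnd
    intro w
    obtain ⟨a, ha, b, hb, rfl⟩ := hsplit w
    rw [map_add, hLiso l hl a ha, h b hb, add_zero]
  -- the map Φ : L → K*
  set Φ : L →ₗ[ℝ] Module.Dual ℝ K := ω.compl₁₂ L.subtype K.subtype with hΦdef
  have hΦapp : ∀ (l : L) (k : K), Φ l k = ω l k := by
    intro l k; simp [hΦdef, LinearMap.compl₁₂_apply]
  have hΦinj' : Function.Injective Φ := by
    rw [injective_iff_map_eq_zero]
    intro l hl
    have : (l : V) = 0 := by
      apply hΦinj l l.2
      intro k hk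
      have := congrFun (congrArg DFunLike.coe hl) ⟨k, hk⟩
      rwa [hΦapp] at this
    exact Subtype.ext this
  have hrk : Module.finrank ℝ L = Module.finrank ℝ (Module.Dual ℝ K) := by
    rw [Subspace.dual_finrank_eq]; exact hdimLK
  set Φe := Φ.linearEquivOfInjective hΦinj' hrk with hΦedef
  set β : K →ₗ[ℝ] Module.Dual ℝ K :=
    (-(1/2 : ℝ)) • (ω.compl₁₂ K.subtype K.subtype) with hβdef
  set φ : K →ₗ[ℝ] L := Φe.symm.toLinearMap ∘ₗ β with hφdef
  have hφ : ∀ k k' : K, ω (φ k) k' = -(1/2) * ω k k' := by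
    intro k k'
    have h1 : Φ (φ k) = β k := by
      have : Φe (Φe.symm (β k)) = β k := Φe.apply_symm_apply _
      rwa [hΦedef, Φ.linearEquivOfInjective_apply] at this
    have h2 := congrFun (congrArg DFunLike.coe h1) k'
    rw [hΦapp] at h2
    rw [h2, hβdef]
    simp only [LinearMap.smul_apply, LinearMap.compl₁₂_apply, Submodule.coe_subtype,
      smul_eq_mul]
  -- the complement N
  set f : K →ₗ[ℝ] V := K.subtype + L.subtype ∘ₗ φ with hfdef
  have hfapp : ∀ k : K, f k = (k : V) + (φ k : V) := fun k => rfl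
  have hfinj : Function.Injective f := by
    rw [injective_iff_map_eq_zero]
    intro k hk
    rw [hfapp] at hk
    have hkL : (k : V) ∈ L := by
      have : (k : V) = -(φ k : V) := eq_neg_of_add_eq_zero_left hk
      rw [this]; exact L.neg_mem (φ k).2
    have : (k : V) = 0 :=
      (Submodule.disjoint_def.mp hcompl.disjoint) _ hkL k.2
    exact Subtype.ext this
  set N : Submodule ℝ V := LinearMap.range f with hNdef
  have hmemN : ∀ v : V, v ∈ N ↔ ∃ k : K, (k : V) + (φ k : V) = v := by
    intro v
    simp [hNdef, LinearMap.mem_range, hfapp]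
  refine ⟨N, ⟨?_, ?_⟩, ?_, ?_, ?_⟩
  · -- ω vanishes on N
    intro v hv w hw
    obtain ⟨k, rfl⟩ := (hmemN v).mp hv
    obtain ⟨k', rfl⟩ := (hmemN w).mp hw
    have e1 := hφ k k'
    have e2 := hφ k' k
    have e3 : ω (k' : V) (k : V) = - ω (k : V) (k' : V) := hskew _ _
    have e4 : ω (k : V) (φ k' : V) = - ω (φ k' : V) (k : V) := hskew _ _
    have e5 : ω (φ k : V) (φ k' : V) = 0 := hLiso _ (φ k).2 _ (φ k').2
    simp only [map_add, LinearMap.add_apply]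
    linarith
  · -- dimension
    have h1 : Module.finrank ℝ N = Module.finrank ℝ K :=
      LinearMap.finrank_range_of_inj hfinj
    rw [h1, ← hdimLK, hLdim]
  · -- G-invariance of N
    intro g v hv
    obtain ⟨k, rfl⟩ := (hmemN v).mp hv
    have hk₂ : ρ g (k : V) ∈ K := hKinv g _ k.2
    set k₂ : K := ⟨ρ g (k : V), hk₂⟩ with hk₂def
    have hgl : ρ g ((φ k : L) : V) ∈ L := hLinv g _ (φ k).2
    have key : ρ g ((φ k : L) : V) = ((φ k₂ : L) : V) := by
      have hl : ρ g ((φ k : L) : V) - ((φ k₂ : L) : V) ∈ L :=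
        L.sub_mem hgl (φ k₂).2
      have hzero : ρ g ((φ k : L) : V) - ((φ k₂ : L) : V) = 0 := by
        apply hΦinj _ hl
        intro k' hk'
        have hk'K : ρ g⁻¹ k' ∈ K := hKinv g⁻¹ _ hk'
        have ha : ω (ρ g ((φ k : L) : V)) k' = ω ((φ k : L) : V) (ρ g⁻¹ k') := by
          conv_lhs => rw [show k' = ρ g (ρ g⁻¹ k') from (hρ g k').symm]
          exact hsymp g _ _
        have hb : ω ((φ k : L) : V) (ρ g⁻¹ k') = -(1/2) * ω (k : V) (ρ g⁻¹ k') :=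
          hφ k ⟨ρ g⁻¹ k', hk'K⟩
        have hc : ω (k : V) (ρ g⁻¹ k') = ω (ρ g (k : V)) k' := by
          have := hsymp g⁻¹ (ρ g (k : V)) k'
          rwa [hρ' g] at this
        have hd : ω ((φ k₂ : L) : V) k' = -(1/2) * ω (ρ g (k : V)) k' :=
          hφ k₂ ⟨k', hk'⟩
        rw [map_sub, LinearMap.sub_apply, ha, hb, hc, hd, sub_self]
      exact sub_eq_zero.mp hzero
    have : ρ g ((k : V) + (φ k : V)) = (k₂ : V) + (φ k₂ : V) := by
      rw [map_add, key]
    rw [this]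
    exact (hmemN _).mpr ⟨k₂, rfl⟩
  · -- disjointness
    rw [disjoint_iff, Submodule.eq_bot_iff]
    rintro v ⟨hvL, hvN⟩
    obtain ⟨k, rfl⟩ := (hmemN _).mp hvN
    have hkL : (k : V) ∈ L := by
      have : (k : V) = ((k : V) + (φ k : V)) - (φ k : V) := by abel
      rw [this]
      exact L.sub_mem hvL (φ k).2
    have hk0 : (k : V) = 0 :=
      (Submodule.disjoint_def.mp hcompl.disjoint) _ hkL k.2
    have : k = 0 := Subtype.ext hk0
    rw [this]
    simp
  · -- codisjointness
    rw [codisjoint_iff, eq_top_iff]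
    intro v _
    obtain ⟨l, hl, k, hk, rfl⟩ := hsplit v
    set k' : K := ⟨k, hk⟩
    have h1 : l - (φ k' : V) ∈ L := L.sub_mem hl (φ k').2
    have h2 : (k' : V) + (φ k' : V) ∈ N := (hmemN _).mpr ⟨k', rfl⟩
    have : l + k = (l - (φ k' : V)) + ((k' : V) + (φ k' : V)) := by
      show l + k = (l - (φ k' : V)) + (k + (φ k' : V)); abel
    rw [this]
    exact Submodule.add_mem_sup h1 h2
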